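/- For every real t > 0, every real x ≥ 0, and every natural number n, the n-th partial derivative in t of g satisfies g^{(n)}(t,x) = x·e^{−x²/t}·∑_{m=0}^{n} x^{2(n−m)}·t^{−(3/2 + 2n − m)}·(−1)^m·C(n,m)·Γ(3/2 + n)/Γ(3/2 + n − m), where C(n,m) is the binomial coefficient and Γ is the Gamma function. -/

import Mathlib

open Real

/-- `g(t,x) = x · t^{-3/2} · exp(-x²/t)`. -/
noncomputable def g (t x : ℝ) : ℝ := x * t ^ (-(3 / 2) : ℝ) * Real.exp (-x ^ 2 / t)

section Aux
open Finset

noncomputable def cc (n m : ℕ) : ℝ :=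
  (-1)^m * (n.choose m : ℝ) * Real.Gamma (3/2 + n) / Real.Gamma (3/2 + (n:ℝ) - m)

noncomputable def H (x : ℝ) (n m : ℕ) (s : ℝ) : ℝ :=
  cc n m * x ^ (2*(n-m)+1) * Real.exp (-x^2/s) * s ^ (-(3/2 + 2*(n:ℝ) - (m:ℝ)))

lemma gamma_pos (n : ℕ) (m : ℕ) (h : m ≤ n + 1) : 0 < Real.Gamma (3/2 + (n:ℝ) - m) := by
  apply Real.Gamma_pos_of_pos
  have : (m:ℝ) ≤ n + 1 := by exact_mod_cast h
  linarith

lemma hasDerivAt_H (x : ℝ) (n m : ℕ) {s : ℝ} (hs : 0 < s) :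
    HasDerivAt (H x n m)
      (cc n m * x ^ (2*(n-m)+1) * Real.exp (-x^2/s) *
        (x^2 * s ^ (-(3/2 + 2*(n:ℝ) - (m:ℝ)) - 2)
          + (-(3/2 + 2*(n:ℝ) - (m:ℝ))) * s ^ (-(3/2 + 2*(n:ℝ) - (m:ℝ)) - 1))) s := by
  set e : ℝ := -(3/2 + 2*(n:ℝ) - (m:ℝ)) with he
  have h1 : HasDerivAt (fun s : ℝ => -x^2/s) (x^2/s^2) s := by
    have := ((hasDerivAt_inv hs.ne').const_mul (-x^2))
    have h : (-x^2) * -(s^2)⁻¹ = x^2/s^2 := by field_simp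
    rw [← h]
    convert this using 2
    · rfl
    · rfl
    · ring
  have h2 : HasDerivAt (fun s : ℝ => Real.exp (-x^2/s)) (Real.exp (-x^2/s) * (x^2/s^2)) s :=
    h1.exp
  have h3 : HasDerivAt (fun s : ℝ => s ^ e) (e * s^(e-1)) s :=
    Real.hasDerivAt_rpow_const (Or.inl hs.ne')
  have h4 := (h2.mul h3).const_mul (cc n m * x ^ (2*(n-m)+1))
  convert h4 using 1
  · rfl
  · rfl
  · funext y; unfold H; rw [Pi.mul_apply]; ring
  · have hm2 : s ^ (e - 2) = s ^ e / s ^ 2 := by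
      rw [Real.rpow_sub hs, Real.rpow_two]
    rw [hm2]
    field_simp

lemma cc_zero (n : ℕ) : cc n 0 = 1 := by
  have := (gamma_pos n 0 (by omega)).ne'
  simp [cc] at this ⊢
  exact this

lemma cc_last (n : ℕ) : cc (n+1) (n+1) = cc n n * (-(3/2 + (n:ℝ))) := by
  unfold cc
  push_cast
  rw [show (3:ℝ)/2 + ((n:ℝ)+1) = (3/2 + n) + 1 by ring,
    Real.Gamma_add_one (by positivity)]
  rw [show (3:ℝ)/2 + (n:ℝ) + 1 - ((n:ℝ)+1) = 3/2 + (n:ℝ) - n by ring]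
  simp [Nat.choose_self]
  ring

lemma aux_alg (m : ℕ) (p r q G D A B C : ℝ) (hq : q ≠ 0) (hG : G ≠ 0)
    (h : C * p = B * q + A * r) :
    (-1:ℝ)^(m+1) * C * (p * D) / (q * G) =
      (-1:ℝ)^(m+1) * B * D / G + (-1:ℝ)^m * A * D / (q * G) * -r := by
  field_simp
  linear_combination (-1:ℝ)^(m+1) * D * h

lemma cc_rec (n m : ℕ) (h : m < n) :
    cc (n+1) (m+1) = cc n (m+1) + cc n m * (-(3/2 + 2*(n:ℝ) - m)) := by
  have key : ((n.choose (m+1)):ℝ) * (m+1) = (n.choose m) * ((n:ℝ) - m) := by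
    have := Nat.choose_succ_right_eq n m
    calc ((n.choose (m+1)):ℝ) * (m+1) = ((n.choose (m+1) * (m+1) : ℕ) : ℝ) := by push_cast; ring
      _ = ((n.choose m * (n - m) : ℕ) : ℝ) := by rw [this]
      _ = (n.choose m) * ((n:ℝ) - m) := by push_cast [Nat.cast_sub h.le]; ring
  have pascal : (((n+1).choose (m+1)):ℝ) = n.choose m + n.choose (m+1) := by
    rw [Nat.choose_succ_succ]; push_cast; ring
  have hG : (0:ℝ) < Real.Gamma (1/2 + (n:ℝ) - m) := by
    have := gamma_pos n (m+1) (by omega)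
    have e : (3:ℝ)/2 + (n:ℝ) - ((m+1:ℕ):ℝ) = 1/2 + (n:ℝ) - m := by push_cast; ring
    rwa [e] at this
  have hq : (0:ℝ) < 1/2 + (n:ℝ) - m := by
    have : (m:ℝ) + 1 ≤ n := by exact_mod_cast h
    linarith
  have hb : (((n+1).choose (m+1)):ℝ) * (3/2+(n:ℝ)) =
      (n.choose (m+1)) * (1/2+(n:ℝ)-m) + (n.choose m) * (3/2+2*(n:ℝ)-m) := by
    rw [pascal]; linear_combination key
  unfold cc
  push_cast
  rw [show (3:ℝ)/2 + ((n:ℝ)+1) = (3/2 + n) + 1 by ring,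
    Real.Gamma_add_one (by positivity : (3:ℝ)/2 + (n:ℝ) ≠ 0)]
  rw [show (3:ℝ)/2 + (n:ℝ) + 1 - ((m:ℝ)+1) = (1/2 + (n:ℝ) - m) + 1 by ring]
  rw [show (3:ℝ)/2 + (n:ℝ) - (m:ℝ) = (1/2 + (n:ℝ) - m) + 1 by ring]
  rw [Real.Gamma_add_one hq.ne']
  rw [show (3:ℝ)/2 + (n:ℝ) - ((m:ℝ)+1) = 1/2 + (n:ℝ) - m by ring]
  exact aux_alg m (3/2+(n:ℝ)) (3/2+2*(n:ℝ)-m) (1/2+(n:ℝ)-m) _ _ _ _ _ hq.ne' hG.ne'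
    (by linear_combination hb)

noncomputable def Phi (x : ℝ) (n : ℕ) (s : ℝ) : ℝ := ∑ m ∈ Finset.range (n+1), H x n m s

lemma hasDerivAt_Phi (x : ℝ) (n : ℕ) {s : ℝ} (hs : 0 < s) :
    HasDerivAt (Phi x n) (Phi x (n+1) s) s := by
  have h1 : HasDerivAt (Phi x n)
      (∑ m ∈ Finset.range (n+1),
        (cc n m * x ^ (2*(n-m)+1) * Real.exp (-x^2/s) *
          (x^2 * s ^ (-(3/2 + 2*(n:ℝ) - (m:ℝ)) - 2)
            + (-(3/2 + 2*(n:ℝ) - (m:ℝ))) * s ^ (-(3/2 + 2*(n:ℝ) - (m:ℝ)) - 1)))) s := by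
    exact HasDerivAt.fun_sum (fun m _ => hasDerivAt_H x n m hs)
  convert h1 using 1
  have split : ∀ m, cc n m * x ^ (2*(n-m)+1) * Real.exp (-x^2/s) *
      (x^2 * s ^ (-(3/2 + 2*(n:ℝ) - (m:ℝ)) - 2)
        + (-(3/2 + 2*(n:ℝ) - (m:ℝ))) * s ^ (-(3/2 + 2*(n:ℝ) - (m:ℝ)) - 1))
      = (cc n m * x ^ (2*(n-m)+1) * Real.exp (-x^2/s) * x^2 * s ^ (-(3/2 + 2*(n:ℝ) - (m:ℝ)) - 2))
        + (cc n m * (-(3/2 + 2*(n:ℝ) - (m:ℝ))) * x ^ (2*(n-m)+1) * Real.exp (-x^2/s)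
            * s ^ (-(3/2 + 2*(n:ℝ) - (m:ℝ)) - 1)) := by
    intro m; ring
  rw [Finset.sum_congr rfl (fun m _ => split m), Finset.sum_add_distrib]
  rw [Finset.sum_range_succ' (fun m => cc n m * x ^ (2*(n-m)+1) * Real.exp (-x^2/s) * x^2
      * s ^ (-(3/2 + 2*(n:ℝ) - (m:ℝ)) - 2))]
  rw [Finset.sum_range_succ]
  unfold Phi
  rw [Finset.sum_range_succ' (fun m => H x (n+1) m s), Finset.sum_range_succ]
  have hA0 : H x (n+1) 0 s = cc n 0 * x ^ (2*(n-0)+1) * Real.exp (-x^2/s) * x^2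
      * s ^ (-(3/2 + 2*(n:ℝ) - ((0:ℕ):ℝ)) - 2) := by
    unfold H
    rw [cc_zero, cc_zero]
    rw [show (-(3/2 + 2*((n+1:ℕ):ℝ) - ((0:ℕ):ℝ))) = -(3/2 + 2*(n:ℝ) - ((0:ℕ):ℝ)) - 2 by
      push_cast; ring]
    rw [show 2*(n+1-0)+1 = (2*(n-0)+1) + 2 by omega, pow_add]
    ring
  have hBn : H x (n+1) (n+1) s = cc n n * (-(3/2 + 2*(n:ℝ) - ((n:ℕ):ℝ))) * x ^ (2*(n-n)+1)
      * Real.exp (-x^2/s) * s ^ (-(3/2 + 2*(n:ℝ) - ((n:ℕ):ℝ)) - 1) := by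
    unfold H
    rw [cc_last]
    rw [show (-(3/2 + 2*((n+1:ℕ):ℝ) - ((n+1:ℕ):ℝ))) = -(3/2 + 2*(n:ℝ) - ((n:ℕ):ℝ)) - 1 by
      push_cast; ring]
    rw [show (n+1) - (n+1) = n - n by omega]
    ring
  have hmid : ∀ m ∈ Finset.range n, H x (n+1) (m+1) s =
      cc n (m+1) * x ^ (2*(n-(m+1))+1) * Real.exp (-x^2/s) * x^2
          * s ^ (-(3/2 + 2*(n:ℝ) - (((m+1):ℕ):ℝ)) - 2)
      + cc n m * (-(3/2 + 2*(n:ℝ) - ((m:ℕ):ℝ))) * x ^ (2*(n-m)+1) * Real.exp (-x^2/s)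
          * s ^ (-(3/2 + 2*(n:ℝ) - ((m:ℕ):ℝ)) - 1) := by
    intro m hm
    rw [Finset.mem_range] at hm
    unfold H
    rw [cc_rec n m hm]
    rw [show (n+1) - (m+1) = n - m by omega]
    rw [show (-(3/2 + 2*((n+1:ℕ):ℝ) - ((m+1:ℕ):ℝ))) = -(3/2 + 2*(n:ℝ) - ((m+1:ℕ):ℝ)) - 2 by
      push_cast; ring]
    rw [show (-(3/2 + 2*(n:ℝ) - ((m:ℕ):ℝ)) - 1) = -(3/2 + 2*(n:ℝ) - ((m+1:ℕ):ℝ)) - 2 by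
      push_cast; ring]
    rw [show 2*(n-m)+1 = (2*(n-(m+1))+1) + 2 by omega, pow_add]
    ring
  rw [Finset.sum_congr rfl hmid, Finset.sum_add_distrib, hA0, hBn]
  ring

end Aux

/-- For every `t > 0`, `x ≥ 0` and `n : ℕ`, the `n`-th partial derivative of `g` in `t`
is given by the closed formula involving binomial coefficients and the Gamma function. -/
theorem stmt_4 (t : ℝ) (ht : 0 < t) (x : ℝ) (hx : 0 ≤ x) (n : ℕ) :
    iteratedDeriv n (fun s => g s x) t =
      x * Real.exp (-x ^ 2 / t) *
        ∑ m ∈ Finset.range (n + 1),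
          x ^ (2 * (n - m)) * t ^ (-(3 / 2 + 2 * (n : ℝ) - (m : ℝ))) * (-1 : ℝ) ^ m *
            (n.choose m : ℝ) * Real.Gamma (3 / 2 + (n : ℝ)) /
            Real.Gamma (3 / 2 + (n : ℝ) - (m : ℝ)) := by
  have main : ∀ k : ℕ, ∀ u : ℝ, 0 < u → iteratedDeriv k (fun s => g s x) u = Phi x k u := by
    intro k
    induction k with
    | zero =>
      intro u hu
      rw [iteratedDeriv_zero]
      unfold Phi
      rw [Finset.sum_range_one]
      unfold H g
      rw [cc_zero]
      rw [show (-(3/2 + 2*((0:ℕ):ℝ) - ((0:ℕ):ℝ))) = (-(3/2) : ℝ) by push_cast; ring]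
      ring
    | succ k ih =>
      intro u hu
      rw [iteratedDeriv_succ]
      have heq : (iteratedDeriv k fun s => g s x) =ᶠ[nhds u] Phi x k := by
        filter_upwards [isOpen_Ioi.mem_nhds hu] with s hs using ih s hs
      rw [heq.deriv_eq]
      exact (hasDerivAt_Phi x k hu).deriv
  rw [main n t ht]
  unfold Phi H
  rw [Finset.mul_sum]
  refine Finset.sum_congr rfl fun m hm => ?_
  unfold cc
  rw [pow_succ]
  ring
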